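/- For all (v, τ, μ) ∈ H₀¹(Ω) × [L²(Ω)]ⁿ × H⁻¹(Ω), the squared norm ‖v‖²_{H₀¹} + ‖τ‖²_{L²} + ‖μ‖²_{H⁻¹} is equivalent (with constants independent of (v,τ,μ)) to ‖div τ + μ‖²_{H⁻¹} + ‖τ − ∇v‖²_{L²} + ⟨μ, v⟩, where ⟨·,·⟩ is the duality pairing between H⁻¹(Ω) and H₀¹(Ω). -/

import Mathlib

open RealInnerProductSpace

/-- The distributional divergence `div τ ∈ H⁻¹` of `τ ∈ L²`, defined through the
(isometric) gradient `∇ : H₀¹ → L²` by `⟨div τ, v⟩ = -⟨τ, ∇v⟩`. -/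
noncomputable def divOp {H E : Type*} [NormedAddCommGroup H] [InnerProductSpace ℝ H]
    [NormedAddCommGroup E] [InnerProductSpace ℝ E]
    (grad : H →ₗᵢ[ℝ] E) (τ : E) : H →L[ℝ] ℝ :=
  -(((innerSL ℝ) τ).comp grad.toContinuousLinearMap)

private lemma stmt_9_aux (P Q a b m t : ℝ)
    (h1 : -(P * a) ≤ t) (h2 : t ≤ P * a)
    (e1 : P * a ≤ 2/3 * P ^ 2 + 3/8 * a ^ 2) (e2 : m ^ 2 ≤ 2 * P ^ 2 + 2 * b ^ 2)
    (e3 : P ^ 2 ≤ 2 * b ^ 2 + 2 * m ^ 2) (e4 : Q ^ 2 ≤ 2 * b ^ 2 + 2 * a ^ 2)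
    (e5 : P * a ≤ P ^ 2 / 2 + a ^ 2 / 2) :
    1/8 * (a ^ 2 + b ^ 2 + m ^ 2) ≤ P ^ 2 + Q ^ 2 / 2 + t + b ^ 2 / 2 + a ^ 2 / 2 ∧
    P ^ 2 + Q ^ 2 / 2 + t + b ^ 2 / 2 + a ^ 2 / 2 ≤ 5 * (a ^ 2 + b ^ 2 + m ^ 2) := by
  constructor
  · nlinarith [sq_nonneg Q]
  · nlinarith

/-- norm equivalence: for all `(v, τ, μ) ∈ H₀¹ × L² × H⁻¹`,
`‖v‖² + ‖τ‖² + ‖μ‖²` is equivalent to `‖div τ + μ‖² + ‖τ - ∇v‖² + ⟨μ, v⟩`,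
with constants independent of `(v, τ, μ)`. Here `H₀¹` carries the norm
`‖v‖ = ‖∇v‖`, modeled by a linear isometry `grad`, and `H⁻¹` is the dual. -/
theorem stmt_9 {H E : Type*} [NormedAddCommGroup H] [InnerProductSpace ℝ H]
    [CompleteSpace H] [NormedAddCommGroup E] [InnerProductSpace ℝ E] [CompleteSpace E]
    (grad : H →ₗᵢ[ℝ] E) :
    ∃ c > (0:ℝ), ∃ C > (0:ℝ), ∀ (v : H) (τ : E) (μ : H →L[ℝ] ℝ),
      c * (‖v‖ ^ 2 + ‖τ‖ ^ 2 + ‖μ‖ ^ 2) ≤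
          ‖divOp grad τ + μ‖ ^ 2 + ‖τ - grad v‖ ^ 2 + μ v ∧
      ‖divOp grad τ + μ‖ ^ 2 + ‖τ - grad v‖ ^ 2 + μ v ≤
          C * (‖v‖ ^ 2 + ‖τ‖ ^ 2 + ‖μ‖ ^ 2) := by
  refine ⟨1/8, by norm_num, 5, by norm_num, fun v τ μ => ?_⟩
  set D := divOp grad τ with hD
  -- pointwise formula for D
  have hDx : ∀ x : H, D x = -⟪τ, grad x⟫ := fun x => rfl
  -- norm bound on D
  have hDnorm : ‖D‖ ≤ ‖τ‖ := by
    refine ContinuousLinearMap.opNorm_le_bound _ (norm_nonneg τ) (fun x => ?_)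
    rw [hDx x, Real.norm_eq_abs, abs_neg]
    calc |⟪τ, grad x⟫| ≤ ‖τ‖ * ‖grad x‖ := abs_real_inner_le_norm τ (grad x)
    _ = ‖τ‖ * ‖x‖ := by rw [grad.norm_map]
  -- inner product identity
  have hinner : ⟪τ, grad v⟫ = (‖τ‖ ^ 2 + ‖v‖ ^ 2 - ‖τ - grad v‖ ^ 2) / 2 := by
    have h := @norm_sub_sq_real E _ _ τ (grad v)
    rw [grad.norm_map] at h
    linarith
  -- key identity for μ v
  have hμv : μ v = (D + μ) v + ⟪τ, grad v⟫ := by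
    have : (D + μ) v = D v + μ v := rfl
    rw [this, hDx v]; ring
  have ht : |(D + μ) v| ≤ ‖D + μ‖ * ‖v‖ := by
    rw [← Real.norm_eq_abs]; exact (D + μ).le_opNorm v
  have hm : ‖μ‖ ≤ ‖D + μ‖ + ‖τ‖ := by
    calc ‖μ‖ = ‖(D + μ) - D‖ := by congr 1; abel
    _ ≤ ‖D + μ‖ + ‖D‖ := norm_sub_le _ _
    _ ≤ ‖D + μ‖ + ‖τ‖ := by linarith
  have hP : ‖D + μ‖ ≤ ‖τ‖ + ‖μ‖ :=
    le_trans (norm_add_le _ _) (add_le_add_left hDnorm _)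
  have hQ : ‖τ - grad v‖ ≤ ‖τ‖ + ‖v‖ := by
    calc ‖τ - grad v‖ ≤ ‖τ‖ + ‖grad v‖ := norm_sub_le _ _
    _ = ‖τ‖ + ‖v‖ := by rw [grad.norm_map]
  have h1 := abs_le.mp ht
  have ha := norm_nonneg v
  have hb := norm_nonneg τ
  have hmm := norm_nonneg μ
  have hPn := norm_nonneg (D + μ)
  have hQn := norm_nonneg (τ - grad v)
  have key : ‖D + μ‖ ^ 2 + ‖τ - grad v‖ ^ 2 + μ v =
      ‖D + μ‖ ^ 2 + ‖τ - grad v‖ ^ 2 / 2 + (D + μ) v + ‖τ‖ ^ 2 / 2 + ‖v‖ ^ 2 / 2 := by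
    rw [hμv, hinner]; ring
  have e1 : ‖D + μ‖ * ‖v‖ ≤ (2/3) * ‖D + μ‖ ^ 2 + (3/8) * ‖v‖ ^ 2 := by
    have h := sq_nonneg (2 * ‖D + μ‖ - (3/2) * ‖v‖)
    have hx : (2 * ‖D + μ‖ - (3/2) * ‖v‖) ^ 2
        = 4 * ‖D + μ‖ ^ 2 - 6 * (‖D + μ‖ * ‖v‖) + 9/4 * ‖v‖ ^ 2 := by ring
    linarith [hx ▸ h]
  have sum_sq : ∀ x y : ℝ, (x + y) ^ 2 ≤ 2 * x ^ 2 + 2 * y ^ 2 := by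
    intro x y
    have h := sq_nonneg (x - y)
    have hx : (x - y) ^ 2 = 2 * x ^ 2 + 2 * y ^ 2 - (x + y) ^ 2 := by ring
    linarith [hx ▸ h]
  have e2 : ‖μ‖ ^ 2 ≤ 2 * ‖D + μ‖ ^ 2 + 2 * ‖τ‖ ^ 2 :=
    (pow_le_pow_left₀ hmm hm 2).trans (sum_sq _ _)
  have e3 : ‖D + μ‖ ^ 2 ≤ 2 * ‖τ‖ ^ 2 + 2 * ‖μ‖ ^ 2 :=
    (pow_le_pow_left₀ hPn hP 2).trans (sum_sq _ _)
  have e4 : ‖τ - grad v‖ ^ 2 ≤ 2 * ‖τ‖ ^ 2 + 2 * ‖v‖ ^ 2 :=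
    (pow_le_pow_left₀ hQn hQ 2).trans (sum_sq _ _)
  have e5 : ‖D + μ‖ * ‖v‖ ≤ ‖D + μ‖ ^ 2 / 2 + ‖v‖ ^ 2 / 2 := by
    have h := sq_nonneg (‖D + μ‖ - ‖v‖)
    have hx : (‖D + μ‖ - ‖v‖) ^ 2
        = ‖D + μ‖ ^ 2 - 2 * (‖D + μ‖ * ‖v‖) + ‖v‖ ^ 2 := by ring
    linarith [hx ▸ h]
  obtain ⟨L, U⟩ := stmt_9_aux ‖D + μ‖ ‖τ - grad v‖ ‖v‖ ‖τ‖ ‖μ‖ ((D + μ) v)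
    h1.1 h1.2 e1 e2 e3 e4 e5
  rw [key]
  exact ⟨L, U⟩
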